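/- Suppose in addition that L_k ≤ 2 L_f for all k ≥ 1, for some L_f > 0, and let x* ∈ Q be a minimizer of φ over Q. Then for every T ≥ 1 the iterates satisfy φ(y_T) − φ(x*) ≤ 4 L_f R² / T², where R² := 2 V_{z_0}(x*). -/

import Mathlib

open RealInnerProductSpace

section Aux

open Filter

private theorem tendsto_slope_grad' {H : Type*} [NormedAddCommGroup H] [InnerProductSpace ℝ H]
    [CompleteSpace H] {F : H → ℝ} {g a : H} (hF : HasGradientAt F g a) (d : H) :
    Tendsto (fun t : ℝ => (F (a + t • d) - F a) / t) (nhdsWithin 0 (Set.Ioi 0)) (nhds ⟪g, d⟫) := by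
  have hline : HasDerivAt (fun t : ℝ => a + t • d) d (0:ℝ) := by
    simpa using ((hasDerivAt_id (0:ℝ)).smul_const d).const_add a
  have hF' : HasFDerivAt F ((InnerProductSpace.toDual ℝ H) g) (a + (0:ℝ) • d) := by
    simpa using hF.hasFDerivAt
  have h1 : HasDerivAt (fun t : ℝ => F (a + t • d)) ⟪g, d⟫ (0:ℝ) := by
    have := hF'.comp_hasDerivAt (0:ℝ) hline
    simpa [InnerProductSpace.toDual_apply_apply, Function.comp_def] using this
  have h2 := hasDerivAt_iff_tendsto_slope.mp h1
  have h3 := h2.mono_left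
    (nhdsWithin_mono 0 (by intro t ht; exact ne_of_gt ht : Set.Ioi (0:ℝ) ⊆ {(0:ℝ)}ᶜ))
  refine h3.congr' ?_
  filter_upwards [self_mem_nhdsWithin] with t ht
  simp [slope_def_field]

private theorem grad_convex_ineq' {H : Type*} [NormedAddCommGroup H] [InnerProductSpace ℝ H]
    [CompleteSpace H] {Q : Set H} {F : H → ℝ} {g x v : H} (hconv : ConvexOn ℝ Q F)
    (hF : HasGradientAt F g x) (hx : x ∈ Q) (hv : v ∈ Q) :
    F x + ⟪g, v - x⟫ ≤ F v := by
  have key : ⟪g, v - x⟫ ≤ F v - F x := by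
    refine le_of_tendsto (tendsto_slope_grad' hF (v - x)) ?_
    filter_upwards [Ioc_mem_nhdsGT_of_mem (by norm_num : (0:ℝ) ∈ Set.Ico (0:ℝ) 1)] with t ht
    have ht0 : 0 < t := ht.1
    have hcv := hconv.2 hx hv (by linarith [ht.2] : (0:ℝ) ≤ 1 - t) (le_of_lt ht0) (by ring)
    have hval : F (x + t • (v - x)) ≤ (1 - t) * F x + t * F v := by
      rw [show x + t • (v - x) = (1 - t) • x + t • v by module]
      simpa [smul_eq_mul] using hcv
    rw [div_le_iff₀ ht0]
    nlinarith
  linarith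

private theorem alpha_rec_A' (L : ℕ → ℝ) (hL : ∀ k, 0 < L k) (α : ℕ → ℝ)
    (hαrec : ∀ k, α (k + 1) =
      Real.sqrt ((α k) ^ 2 * L k / L (k + 1) + 1 / (4 * (L (k + 1)) ^ 2))
        + 1 / (2 * L (k + 1)))
    (A : ℕ → ℝ) (hA : ∀ k, A k = (α k) ^ 2 * L k) (k : ℕ) :
    A (k+1) = A k + α (k+1) := by
  have hL' := hL (k+1)
  have hL'ne : L (k+1) ≠ 0 := hL'.ne'
  have harg : (0:ℝ) ≤ (α k)^2 * L k / L (k+1) + 1/(4*(L (k+1))^2) := by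
    have h1 : (0:ℝ) ≤ (α k)^2 * L k / L (k+1) :=
      div_nonneg (mul_nonneg (sq_nonneg _) (hL k).le) hL'.le
    have h2 : (0:ℝ) < 1/(4*(L (k+1))^2) := by
      apply div_pos one_pos; nlinarith
    linarith
  set s := Real.sqrt ((α k)^2 * L k / L (k+1) + 1/(4*(L (k+1))^2)) with hs
  have hs2 : s ^ 2 = (α k)^2 * L k / L (k+1) + 1/(4*(L (k+1))^2) := Real.sq_sqrt harg
  rw [hA (k+1), hA k, hαrec k, ← hs]
  field_simp at hs2 ⊢
  linear_combination hs2

private theorem alpha_ge' (L : ℕ → ℝ) (hL : ∀ k, 0 < L k) (α : ℕ → ℝ)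
    (hαrec : ∀ k, α (k + 1) =
      Real.sqrt ((α k) ^ 2 * L k / L (k + 1) + 1 / (4 * (L (k + 1)) ^ 2))
        + 1 / (2 * L (k + 1))) (k : ℕ) :
    1 / L (k+1) ≤ α (k+1) := by
  have hL' := hL (k+1)
  have h4 : Real.sqrt (1/(4*(L (k+1))^2)) = 1/(2*L (k+1)) := by
    have h : (1/(2*L (k+1)))^2 = 1/(4*(L (k+1))^2) := by
      field_simp; ring
    rw [← h, Real.sqrt_sq (le_of_lt (div_pos one_pos (by linarith)))]
  have hmono : Real.sqrt (1/(4*(L (k+1))^2)) ≤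
      Real.sqrt ((α k)^2 * L k / L (k+1) + 1/(4*(L (k+1))^2)) := by
    apply Real.sqrt_le_sqrt
    have : (0:ℝ) ≤ (α k)^2 * L k / L (k+1) :=
      div_nonneg (mul_nonneg (sq_nonneg _) (hL k).le) hL'.le
    linarith
  rw [hαrec k]
  rw [h4] at hmono
  have : 1 / L (k+1) = 1/(2*L (k+1)) + 1/(2*L (k+1)) := by
    field_simp; ring
  linarith

end Aux

set_option maxHeartbeats 2000000 in
/-- Convergence rate of the adaptive accelerated composite gradient method:
if moreover `L_k ≤ 2 L_f` for all `k ≥ 1`, for some `L_f > 0`, and `x*` is a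
minimizer of `φ` over `Q`, then for every `T ≥ 1`,
`φ(y_T) − φ(x*) ≤ 4 L_f R² / T²`, where `R² := 2 V_{z_0}(x*)`. -/
theorem stmt9
    {H : Type*} [NormedAddCommGroup H] [InnerProductSpace ℝ H] [CompleteSpace H]
    (Q : Set H) (hQne : Q.Nonempty) (hQclosed : IsClosed Q) (hQconv : Convex ℝ Q)
    (f Ψ ω : H → ℝ) (fgrad ωgrad : H → H)
    (hf : ∀ x, HasGradientAt f (fgrad x) x)
    (hω : ∀ x, HasGradientAt ω (ωgrad x) x)
    (hfconv : ConvexOn ℝ Q f) (hΨconv : ConvexOn ℝ Q Ψ)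
    (hωstrong : ∀ a ∈ Q, ∀ b ∈ Q,
      ω a + ⟪ωgrad a, b - a⟫ + (1 / 2) * ‖b - a‖ ^ 2 ≤ ω b)
    (V : H → H → ℝ)
    (hV : ∀ a b, V a b = ω b - ω a - ⟪ωgrad a, b - a⟫)
    (φ : H → ℝ) (hφ : ∀ v, φ v = f v + Ψ v)
    (L : ℕ → ℝ) (hL : ∀ k, 0 < L k)
    (α : ℕ → ℝ) (hα0 : α 0 = 0)
    (hαrec : ∀ k, α (k + 1) =
      Real.sqrt ((α k) ^ 2 * L k / L (k + 1) + 1 / (4 * (L (k + 1)) ^ 2))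
        + 1 / (2 * L (k + 1)))
    (τ : ℕ → ℝ) (hτ : ∀ k, τ k = 1 / (α (k + 1) * L (k + 1)))
    (A : ℕ → ℝ) (hA : ∀ k, A k = (α k) ^ 2 * L k)
    (x y z : ℕ → H)
    (hx0 : x 0 ∈ Q) (hy0 : y 0 = x 0) (hz0 : z 0 = x 0)
    (hxrec : ∀ k, x (k + 1) = τ k • z k + (1 - τ k) • y k)
    (hyQ : ∀ k, y (k + 1) ∈ Q)
    (hymin : ∀ k, ∀ v ∈ Q,
      ⟪fgrad (x (k + 1)), y (k + 1) - x (k + 1)⟫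
          + (L (k + 1) / 2) * ‖y (k + 1) - x (k + 1)‖ ^ 2 + Ψ (y (k + 1)) ≤
        ⟪fgrad (x (k + 1)), v - x (k + 1)⟫
          + (L (k + 1) / 2) * ‖v - x (k + 1)‖ ^ 2 + Ψ v)
    (hzQ : ∀ k, z (k + 1) ∈ Q)
    (hzmin : ∀ k, ∀ v ∈ Q,
      ⟪fgrad (x (k + 1)), z (k + 1) - z k⟫
          + (1 / α (k + 1)) * V (z k) (z (k + 1)) + Ψ (z (k + 1)) ≤
        ⟪fgrad (x (k + 1)), v - z k⟫ + (1 / α (k + 1)) * V (z k) v + Ψ v)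
    (hdescent : ∀ k, f (y (k + 1)) ≤
      f (x (k + 1)) + ⟪fgrad (x (k + 1)), y (k + 1) - x (k + 1)⟫
        + (L (k + 1) / 2) * ‖y (k + 1) - x (k + 1)‖ ^ 2)
    (Lf : ℝ) (hLf : 0 < Lf) (hLbound : ∀ k, 1 ≤ k → L k ≤ 2 * Lf)
    (xstar : H) (hxstarQ : xstar ∈ Q) (hxstarmin : ∀ v ∈ Q, φ xstar ≤ φ v)
    (T : ℕ) (hT : 1 ≤ T) :
    φ (y T) - φ xstar ≤ 4 * Lf * (2 * V (z 0) xstar) / (T : ℝ) ^ 2 := by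
  -- basic memberships
  have hzQall : ∀ k, z k ∈ Q := by
    intro k; cases k with
    | zero => rw [hz0]; exact hx0
    | succ n => exact hzQ n
  have hyQall : ∀ k, y k ∈ Q := by
    intro k; cases k with
    | zero => rw [hy0]; exact hx0
    | succ n => exact hyQ n
  -- basic scalar facts
  have hAnn : ∀ k, 0 ≤ A k := fun k => by
    rw [hA k]; exact mul_nonneg (sq_nonneg _) (hL k).le
  have hαge : ∀ k, 1 / L (k+1) ≤ α (k+1) := fun k => alpha_ge' L hL α hαrec k
  have hαpos : ∀ k, 0 < α (k+1) := fun k =>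
    lt_of_lt_of_le (div_pos one_pos (hL (k+1))) (hαge k)
  have hArec : ∀ k, A (k+1) = A k + α (k+1) := fun k => alpha_rec_A' L hL α hαrec A hA k
  have hApos : ∀ k, 0 < A (k+1) := fun k => by
    have h1 := hAnn k; have h2 := hαpos k; rw [hArec k]; linarith
  have hτpos : ∀ k, 0 < τ k := fun k => by
    rw [hτ k]; exact div_pos one_pos (mul_pos (hαpos k) (hL (k+1)))
  have hτle : ∀ k, τ k ≤ 1 := fun k => by
    rw [hτ k]
    rw [div_le_one (mul_pos (hαpos k) (hL (k+1)))]
    have := (div_le_iff₀ (hL (k+1))).mp (hαge k)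
    linarith
  have hxQ : ∀ k, x k ∈ Q := by
    intro k; cases k with
    | zero => exact hx0
    | succ n =>
      rw [hxrec n]
      exact hQconv (hzQall n) (hyQall n) (hτpos n).le (by linarith [hτle n]) (by ring)
  have hVnn : ∀ a ∈ Q, ∀ b ∈ Q, 0 ≤ V a b := by
    intro a ha b hb
    rw [hV]
    have h1 := hωstrong a ha b hb
    have h2 : (0:ℝ) ≤ ‖b - a‖ ^ 2 := sq_nonneg _
    linarith
  -- growth of A
  have hAgrow : ∀ k : ℕ, (k:ℝ)^2/(8*Lf) ≤ A k := by
    intro k; induction k with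
    | zero => simp [hA 0, hα0]
    | succ n ih =>
      have hL' := hL (n+1)
      have hLb := hLbound (n+1) (Nat.le_add_left 1 n)
      have hAn := hAnn n
      have hsq : Real.sqrt ((n:ℝ)^2/(16*Lf^2)) = (n:ℝ)/(4*Lf) := by
        rw [show (n:ℝ)^2/(16*Lf^2) = ((n:ℝ)/(4*Lf))^2 by ring]
        exact Real.sqrt_sq (by positivity)
      have h1 : (n:ℝ)^2/(16*Lf^2) ≤ A n / L (n+1) := by
        have e1 : (n:ℝ)^2/(16*Lf^2) = ((n:ℝ)^2/(8*Lf))/(2*Lf) := by ring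
        rw [e1]
        exact div_le_div₀ hAn ih hL' hLb
      have h2 : (n:ℝ)/(4*Lf) + 1/(4*Lf) ≤ α (n+1) := by
        rw [hαrec n]
        have e : (α n)^2 * L n = A n := (hA n).symm
        rw [e]
        have hm : (n:ℝ)/(4*Lf) ≤ Real.sqrt (A n / L (n+1) + 1/(4*(L (n+1))^2)) := by
          rw [← hsq]
          apply Real.sqrt_le_sqrt
          have hpos : (0:ℝ) < 1/(4*(L (n+1))^2) := by
            apply div_pos one_pos; nlinarith
          linarith
        have hc : 1/(4*Lf) ≤ 1/(2*L (n+1)) := by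
          apply one_div_le_one_div_of_le (by linarith) (by linarith)
        linarith
      rw [hArec n]
      push_cast
      have e4 : (n:ℝ)/(4*Lf) + 1/(4*Lf) = (2*(n:ℝ)+2)/(8*Lf) := by
        field_simp
        ring
      have e5 : ((n:ℝ)+1)^2/(8*Lf) = (n:ℝ)^2/(8*Lf) + (2*(n:ℝ)+1)/(8*Lf) := by
        field_simp
        ring
      have h6 : (2*(n:ℝ)+1)/(8*Lf) ≤ (2*(n:ℝ)+2)/(8*Lf) := by
        gcongr
        linarith
      linarith [ih, h2, e4, e5, h6]
  -- per-step estimate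
  have step : ∀ k, A (k+1) * (φ (y (k+1)) - φ xstar) + V (z (k+1)) xstar ≤
      A k * (φ (y k) - φ xstar) + V (z k) xstar := by
    intro k
    have hL' := hL (k+1)
    have hL'ne : L (k+1) ≠ 0 := hL'.ne'
    have hαp := hαpos k
    have hαne : α (k+1) ≠ 0 := hαp.ne'
    have hA' := hArec k
    have hAk := hAnn k
    have hA'pos := hApos k
    have hτ0 := hτpos k
    have hτ1 := hτle k
    -- scalar identities
    have e1 : A (k+1) * τ k = α (k+1) := by
      rw [hτ k, hA (k+1)]; field_simp
    have e2 : A (k+1) * (1 - τ k) = A k := by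
      have e2' : A (k+1) * (1 - τ k) = A (k+1) - A (k+1) * τ k := by ring
      linarith [e1, hA', e2']
    have e3 : A (k+1) * (L (k+1)/2 * τ k ^ 2) = 1/2 := by
      rw [hτ k, hA (k+1)]; field_simp
    -- the comparison point for the y-step
    obtain ⟨v, hv⟩ : ∃ w : H, w = τ k • z (k+1) + (1 - τ k) • y k := ⟨_, rfl⟩
    have hvQ : v ∈ Q := by
      rw [hv]
      exact hQconv (hzQ k) (hyQall k) hτ0.le (by linarith) (by ring)
    have hveq : v - x (k+1) = τ k • (z (k+1) - z k) := by
      rw [hv, hxrec k]; module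
    have eqv1 : ⟪fgrad (x (k+1)), v - x (k+1)⟫ = τ k * ⟪fgrad (x (k+1)), z (k+1) - z k⟫ := by
      rw [hveq, real_inner_smul_right]
    have eqv2 : (L (k+1)/2) * ‖v - x (k+1)‖^2
        = L (k+1)/2 * (τ k^2 * ‖z (k+1) - z k‖^2) := by
      rw [hveq, norm_smul, mul_pow, Real.norm_eq_abs, sq_abs]
    have hΨv : Ψ v ≤ τ k * Ψ (z (k+1)) + (1 - τ k) * Ψ (y k) := by
      rw [hv]
      exact hΨconv.2 (hzQ k) (hyQall k) hτ0.le (by linarith) (by ring)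
    have key1 : φ (y (k+1)) ≤ f (x (k+1)) + (τ k * ⟪fgrad (x (k+1)), z (k+1) - z k⟫
        + L (k+1)/2 * (τ k^2 * ‖z (k+1) - z k‖^2)
        + (τ k * Ψ (z (k+1)) + (1 - τ k) * Ψ (y k))) := by
      have hd := hdescent k
      have hym := hymin k v hvQ
      have hpy := hφ (y (k+1))
      linarith [hd, hym, hpy, eqv1, eqv2, hΨv]
    have key2 : A (k+1) * φ (y (k+1)) ≤ A (k+1) * f (x (k+1))
        + α (k+1) * ⟪fgrad (x (k+1)), z (k+1) - z k⟫ + 1/2 * ‖z (k+1) - z k‖^2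
        + α (k+1) * Ψ (z (k+1)) + A k * Ψ (y k) := by
      calc A (k+1) * φ (y (k+1))
          ≤ A (k+1) * (f (x (k+1)) + (τ k * ⟪fgrad (x (k+1)), z (k+1) - z k⟫
            + L (k+1)/2 * (τ k^2 * ‖z (k+1) - z k‖^2)
            + (τ k * Ψ (z (k+1)) + (1 - τ k) * Ψ (y k)))) :=
          mul_le_mul_of_nonneg_left key1 hA'pos.le
        _ = A (k+1) * f (x (k+1))
            + (A (k+1) * τ k) * ⟪fgrad (x (k+1)), z (k+1) - z k⟫
            + (A (k+1) * (L (k+1)/2 * τ k ^ 2)) * ‖z (k+1) - z k‖^2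
            + (A (k+1) * τ k) * Ψ (z (k+1)) + (A (k+1) * (1 - τ k)) * Ψ (y k) := by ring
        _ = _ := by rw [e1, e2, e3]
    have key3 : 1/2 * ‖z (k+1) - z k‖^2 ≤ V (z k) (z (k+1)) := by
      have h1 := hωstrong (z k) (hzQall k) (z (k+1)) (hzQ k)
      rw [hV]; linarith
    -- three-point inequality for the z-step via first-order optimality
    have eqneg : ⟪fgrad (x (k+1)), z (k+1) - xstar⟫
        = -⟪fgrad (x (k+1)), xstar - z (k+1)⟫ := by
      rw [show z (k+1) - xstar = -(xstar - z (k+1)) by module, inner_neg_right]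
    have hlim : α (k+1) * (⟪fgrad (x (k+1)), z (k+1) - xstar⟫ + Ψ (z (k+1)) - Ψ xstar)
        + ⟪ωgrad (z k), xstar - z (k+1)⟫ ≤ ⟪ωgrad (z (k+1)), xstar - z (k+1)⟫ := by
      refine ge_of_tendsto (tendsto_slope_grad' (hω (z (k+1))) (xstar - z (k+1))) ?_
      filter_upwards [Ioc_mem_nhdsGT_of_mem (by norm_num : (0:ℝ) ∈ Set.Ico (0:ℝ) 1)] with t ht
      have ht0 : 0 < t := ht.1
      obtain ⟨vt, hvt⟩ : ∃ w : H, w = z (k+1) + t • (xstar - z (k+1)) := ⟨_, rfl⟩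
      have hvtQ : vt ∈ Q := by
        have hmem := hQconv (hzQ k) hxstarQ
          (by linarith [ht.2] : (0:ℝ) ≤ 1 - t) ht0.le (by ring)
        rw [hvt, show z (k+1) + t • (xstar - z (k+1))
          = (1 - t) • z (k+1) + t • xstar by module]
        exact hmem
      have hmin := hzmin k vt hvtQ
      have hmin2 : α (k+1) * ⟪fgrad (x (k+1)), z (k+1) - z k⟫ + V (z k) (z (k+1))
          + α (k+1) * Ψ (z (k+1))
          ≤ α (k+1) * ⟪fgrad (x (k+1)), vt - z k⟫ + V (z k) vt + α (k+1) * Ψ vt := by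
        have h := mul_le_mul_of_nonneg_left hmin hαp.le
        have l1 : α (k+1) * (⟪fgrad (x (k+1)), z (k+1) - z k⟫
            + (1 / α (k+1)) * V (z k) (z (k+1)) + Ψ (z (k+1)))
            = α (k+1) * ⟪fgrad (x (k+1)), z (k+1) - z k⟫ + V (z k) (z (k+1))
              + α (k+1) * Ψ (z (k+1)) := by
          field_simp
        have l2 : α (k+1) * (⟪fgrad (x (k+1)), vt - z k⟫
            + (1 / α (k+1)) * V (z k) vt + Ψ vt)
            = α (k+1) * ⟪fgrad (x (k+1)), vt - z k⟫ + V (z k) vt + α (k+1) * Ψ vt := by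
          field_simp
        linarith [h, l1, l2]
      rw [hV, hV] at hmin2
      have eqa : ⟪fgrad (x (k+1)), vt - z k⟫ = ⟪fgrad (x (k+1)), z (k+1) - z k⟫
          + t * ⟪fgrad (x (k+1)), xstar - z (k+1)⟫ := by
        rw [show vt - z k = (z (k+1) - z k) + t • (xstar - z (k+1)) by rw [hvt]; module,
          inner_add_right, real_inner_smul_right]
      have eqa' : α (k+1) * ⟪fgrad (x (k+1)), vt - z k⟫
          = α (k+1) * ⟪fgrad (x (k+1)), z (k+1) - z k⟫
            + α (k+1) * (t * ⟪fgrad (x (k+1)), xstar - z (k+1)⟫) := by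
        linear_combination α (k+1) * eqa
      have eqb : ⟪ωgrad (z k), vt - z k⟫ = ⟪ωgrad (z k), z (k+1) - z k⟫
          + t * ⟪ωgrad (z k), xstar - z (k+1)⟫ := by
        rw [show vt - z k = (z (k+1) - z k) + t • (xstar - z (k+1)) by rw [hvt]; module,
          inner_add_right, real_inner_smul_right]
      have hΨt : Ψ vt ≤ (1 - t) * Ψ (z (k+1)) + t * Ψ xstar := by
        have hmem := hΨconv.2 (hzQ k) hxstarQ
          (by linarith [ht.2] : (0:ℝ) ≤ 1 - t) ht0.le (by ring)
        rw [hvt, show z (k+1) + t • (xstar - z (k+1))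
          = (1 - t) • z (k+1) + t • xstar by module]
        exact hmem
      have hΨt' : α (k+1) * Ψ vt ≤ α (k+1) * ((1 - t) * Ψ (z (k+1)) + t * Ψ xstar) :=
        mul_le_mul_of_nonneg_left hΨt hαp.le
      have eqng : α (k+1) * (t * ⟪fgrad (x (k+1)), z (k+1) - xstar⟫)
          = - (α (k+1) * (t * ⟪fgrad (x (k+1)), xstar - z (k+1)⟫)) := by
        linear_combination (α (k+1) * t) * eqneg
      rw [le_div_iff₀ ht0, ← hvt]
      linarith [hmin2, eqa', eqb, hΨt', eqng]
    have eq1 : ⟪fgrad (x (k+1)), z (k+1) - z k⟫ - ⟪fgrad (x (k+1)), xstar - z k⟫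
        = ⟪fgrad (x (k+1)), z (k+1) - xstar⟫ := by
      rw [← inner_sub_right]
      congr 1
      module
    have eq1' : α (k+1) * ⟪fgrad (x (k+1)), z (k+1) - z k⟫
        - α (k+1) * ⟪fgrad (x (k+1)), xstar - z k⟫
        = α (k+1) * ⟪fgrad (x (k+1)), z (k+1) - xstar⟫ := by
      linear_combination α (k+1) * eq1
    have eq2 : ⟪ωgrad (z k), xstar - z k⟫ - ⟪ωgrad (z k), z (k+1) - z k⟫
        = ⟪ωgrad (z k), xstar - z (k+1)⟫ := by
      rw [← inner_sub_right]
      congr 1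
      module
    have key4 : α (k+1) * ⟪fgrad (x (k+1)), z (k+1) - z k⟫ + V (z k) (z (k+1))
        + α (k+1) * Ψ (z (k+1)) + V (z (k+1)) xstar
        ≤ α (k+1) * ⟪fgrad (x (k+1)), xstar - z k⟫ + V (z k) xstar
          + α (k+1) * Ψ xstar := by
      simp only [hV]
      linarith [hlim, eq1', eq2]
    -- relating the x-step displacement
    have hscalar : α (k+1) * (1 - τ k) = A k * τ k := by
      have hAk' : A k = α (k+1)^2 * L (k+1) - α (k+1) := by
        have h := hA (k+1); linarith [hA']
      rw [hτ k, hAk']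
      field_simp
    have hvec : α (k+1) • (x (k+1) - z k) = A k • (y k - x (k+1)) := by
      rw [hxrec k]
      rw [show τ k • z k + (1 - τ k) • y k - z k = (1 - τ k) • (y k - z k) by module]
      rw [show y k - (τ k • z k + (1 - τ k) • y k) = τ k • (y k - z k) by module]
      rw [smul_smul, smul_smul, hscalar]
    have key5 : α (k+1) * ⟪fgrad (x (k+1)), x (k+1) - z k⟫
        = A k * ⟪fgrad (x (k+1)), y k - x (k+1)⟫ := by
      rw [← real_inner_smul_right, ← real_inner_smul_right, hvec]
    have eqsplit : α (k+1) * ⟪fgrad (x (k+1)), xstar - z k⟫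
        = α (k+1) * ⟪fgrad (x (k+1)), xstar - x (k+1)⟫
          + α (k+1) * ⟪fgrad (x (k+1)), x (k+1) - z k⟫ := by
      have e : ⟪fgrad (x (k+1)), xstar - z k⟫ = ⟪fgrad (x (k+1)), xstar - x (k+1)⟫
          + ⟪fgrad (x (k+1)), x (k+1) - z k⟫ := by
        rw [← inner_add_right]
        congr 1
        module
      linear_combination α (k+1) * e
    have hcf1 := grad_convex_ineq' hfconv (hf (x (k+1))) (hxQ (k+1)) hxstarQ
    have hcf2 := grad_convex_ineq' hfconv (hf (x (k+1))) (hxQ (k+1)) (hyQall k)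
    have hcf1' : α (k+1) * (f (x (k+1)) + ⟪fgrad (x (k+1)), xstar - x (k+1)⟫)
        ≤ α (k+1) * f xstar := mul_le_mul_of_nonneg_left hcf1 hαp.le
    have hcf2' : A k * (f (x (k+1)) + ⟪fgrad (x (k+1)), y k - x (k+1)⟫)
        ≤ A k * f (y k) := mul_le_mul_of_nonneg_left hcf2 hAk
    have eqA : A (k+1) * φ xstar = A k * φ xstar + α (k+1) * φ xstar := by
      linear_combination (φ xstar) * hA'
    have eqA2 : A (k+1) * f (x (k+1)) = A k * f (x (k+1)) + α (k+1) * f (x (k+1)) := by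
      linear_combination (f (x (k+1))) * hA'
    have eqφ1 : α (k+1) * φ xstar = α (k+1) * f xstar + α (k+1) * Ψ xstar := by
      linear_combination α (k+1) * hφ xstar
    have eqφ2 : A k * φ (y k) = A k * f (y k) + A k * Ψ (y k) := by
      linear_combination (A k) * hφ (y k)
    linarith [key2, key3, key4, key5, eqsplit, hcf1', hcf2', eqA, eqA2, eqφ1, eqφ2]
  -- telescoping
  have hA0 : A 0 = 0 := by rw [hA 0, hα0]; ring
  have tele : ∀ k, A k * (φ (y k) - φ xstar) + V (z k) xstar ≤ V (z 0) xstar := by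
    intro k; induction k with
    | zero => rw [hA0]; simp
    | succ n ih => linarith [step n, ih]
  -- conclusion
  have hD : 0 ≤ φ (y T) - φ xstar := by linarith [hxstarmin (y T) (hyQall T)]
  have hVT : 0 ≤ V (z T) xstar := hVnn (z T) (hzQall T) xstar hxstarQ
  have hV0 : 0 ≤ V (z 0) xstar := hVnn (z 0) (hzQall 0) xstar hxstarQ
  have h1 : A T * (φ (y T) - φ xstar) ≤ V (z 0) xstar := by linarith [tele T]
  have hAT : (T:ℝ)^2/(8*Lf) ≤ A T := hAgrow T
  have hAT' : (T:ℝ)^2 ≤ A T * (8*Lf) := (div_le_iff₀ (by positivity)).mp hAT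
  have hT1 : (1:ℝ) ≤ (T:ℝ) := by exact_mod_cast hT
  have hT2 : (0:ℝ) < (T:ℝ)^2 := pow_pos (by linarith) 2
  rw [le_div_iff₀ hT2]
  nlinarith [mul_le_mul_of_nonneg_left hAT' hD,
    mul_le_mul_of_nonneg_left h1 (by positivity : (0:ℝ) ≤ 8*Lf)]
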